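/- Let k ≥ 2 be an integer, λ ∈ ℂ*, and let P(ξ) = Σ_{m=1}^{N} c_m ξ^m be a polynomial with gcd({k} ∪ {m : c_m ≠ 0}) = 1, where N = l'(k−1) for some positive integer l'. Then the germ f(ξ, z) = (ξ^k, λ ξ^{l'(k−1)} z + P(ξ)) is injective on a sufficiently small punctured neighborhood: there exist ε, δ > 0 such that if 0 < |ξ_0|, |ξ_1| < ε, |z_0|, |z_1| < δ and f(ξ_0, z_0) = f(ξ_1, z_1), then (ξ_0, z_0) = (ξ_1, z_1). -/

import Mathlib

set_option maxHeartbeats 1000000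


/-- Section 5 (local injectivity of the contracting germ): let `k ≥ 2`, `λ ≠ 0`, and
`P(ξ) = Σ_{m=1}^{N} c_m ξ^m` with `N = l'(k−1)` and `gcd({k} ∪ {m : c_m ≠ 0}) = 1`.
Then the germ `f(ξ, z) = (ξ^k, λ ξ^{l'(k−1)} z + P(ξ))` is injective on a sufficiently
small punctured neighborhood of `(0,0)`. -/
theorem germ_locally_injective (k : ℕ) (hk : 2 ≤ k) (lam : ℂ) (hlam : lam ≠ 0)
    (l' : ℕ) (hl' : 1 ≤ l') (N : ℕ) (hN : N = l' * (k - 1))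
    (c : ℕ → ℂ) (hc0 : c 0 = 0) (hcN : ∀ m, N < m → c m = 0)
    (hgcd : ∀ d : ℕ, d ∣ k → (∀ m, c m ≠ 0 → d ∣ m) → d = 1) :
    ∃ ε > (0:ℝ), ∃ δ > (0:ℝ), ∀ ξ₀ ξ₁ z₀ z₁ : ℂ,
      ξ₀ ≠ 0 → ‖ξ₀‖ < ε → ξ₁ ≠ 0 → ‖ξ₁‖ < ε →
      ‖z₀‖ < δ → ‖z₁‖ < δ →
      ξ₀ ^ k = ξ₁ ^ k →
      lam * ξ₀ ^ N * z₀ + (∑ m ∈ Finset.range (N + 1), c m * ξ₀ ^ m) =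
        lam * ξ₁ ^ N * z₁ + (∑ m ∈ Finset.range (N + 1), c m * ξ₁ ^ m) →
      ξ₀ = ξ₁ ∧ z₀ = z₁ := by
  classical
  have hkpos : 0 < k := by omega
  -- Key: for any nontrivial k-th root of unity ω there is m with c m ≠ 0 and ω^m ≠ 1
  have key : ∀ ω : ℂ, ω ^ k = 1 → ω ≠ 1 → ∃ m, c m ≠ 0 ∧ ω ^ m ≠ 1 := by
    intro ω hω hω1
    by_contra h
    push_neg at h
    have hd : orderOf ω = 1 :=
      hgcd _ (orderOf_dvd_of_pow_eq_one hω)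
        (fun m hm => orderOf_dvd_of_pow_eq_one (h m hm))
    exact hω1 (orderOf_eq_one_iff.mp hd)
  -- the "leading coefficient" function
  set A : ℂ → ℝ := fun ω =>
    if h : ∃ m, c m ≠ 0 ∧ ω ^ m ≠ 1 then
      ‖c (Nat.find h) * (ω ^ (Nat.find h) - 1)‖ else 1 with hA
  have hApos : ∀ ω, 0 < A ω := by
    intro ω
    rw [hA]
    by_cases h : ∃ m, c m ≠ 0 ∧ ω ^ m ≠ 1
    · simp only [dif_pos h]
      have h1 := (Nat.find_spec h).1
      have h2 := (Nat.find_spec h).2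
      have hne : c (Nat.find h) * (ω ^ (Nat.find h) - 1) ≠ 0 :=
        mul_ne_zero h1 (sub_ne_zero.mpr h2)
      exact norm_pos_iff.mpr hne
    · simp [dif_neg h]
  set S : Finset ℂ := Polynomial.nthRootsFinset k (1 : ℂ) with hS
  set F : Finset ℝ := insert (1:ℝ) (S.image A) with hF
  have hFne : F.Nonempty := ⟨1, Finset.mem_insert_self _ _⟩
  set α : ℝ := F.min' hFne with hαdef
  have hα1 : α ≤ 1 := Finset.min'_le _ _ (Finset.mem_insert_self _ _)
  have hαA : ∀ ω ∈ S, α ≤ A ω := fun ω hω =>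
    Finset.min'_le _ _ (Finset.mem_insert_of_mem (Finset.mem_image_of_mem A hω))
  have hαpos : 0 < α := by
    have hm := Finset.min'_mem F hFne
    rcases Finset.mem_insert.mp hm with h | h
    · rw [hαdef, h]; norm_num
    · rcases Finset.mem_image.mp h with ⟨ω, _, hωe⟩
      rw [hαdef, ← hωe]; exact hApos ω
  clear_value α
  set Sc : ℝ := ∑ m ∈ Finset.range (N + 1), ‖c m‖ with hSc
  have hScnn : 0 ≤ Sc := Finset.sum_nonneg fun m _ => norm_nonneg _
  clear_value Sc
  set C : ℝ := 2 * Sc + 1 with hC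
  have hCpos : (0:ℝ) < C := by rw [hC]; linarith
  have hC1 : (1:ℝ) ≤ C := by rw [hC]; linarith
  clear_value C
  have hlampos : 0 < ‖lam‖ := by simpa using hlam
  refine ⟨α / (2 * C), div_pos hαpos (by linarith), α / (8 * ‖lam‖),
    div_pos hαpos (by linarith), ?_⟩
  intro ξ₀ ξ₁ z₀ z₁ hξ₀ hξ₀e hξ₁ hξ₁e hz₀ hz₁ hpow heq
  set ω : ℂ := ξ₁ / ξ₀ with hωdef
  have hξ₁eq : ξ₁ = ω * ξ₀ := (div_mul_cancel₀ _ hξ₀).symm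
  have hωk : ω ^ k = 1 := by
    rw [hωdef, div_pow, ← hpow, div_self (pow_ne_zero _ hξ₀)]
  by_cases hω1 : ω = 1
  · -- then ξ₀ = ξ₁ and z₀ = z₁
    have hξeq : ξ₀ = ξ₁ := by rw [hξ₁eq, hω1, one_mul]
    refine ⟨hξeq, ?_⟩
    rw [← hξeq] at heq
    have h2 : lam * ξ₀ ^ N * z₀ = lam * ξ₀ ^ N * z₁ := by
      exact add_right_cancel heq
    exact mul_left_cancel₀ (mul_ne_zero hlam (pow_ne_zero _ hξ₀)) h2
  · exfalso
    obtain h := key ω hωk hω1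
    set m₀ : ℕ := Nat.find h with hm₀def
    have hm₀c : c m₀ ≠ 0 := (Nat.find_spec h).1
    have hm₀ω : ω ^ m₀ ≠ 1 := (Nat.find_spec h).2
    have hmin : ∀ m < m₀, c m = 0 ∨ ω ^ m = 1 := by
      intro m hm
      have := Nat.find_min h hm
      by_contra hcon
      push_neg at hcon
      exact this ⟨hcon.1, hcon.2⟩
    have hm₀N : m₀ ≤ N := by
      by_contra hcon
      exact hm₀c (hcN m₀ (by omega))
    have habsω : ‖ω‖ = 1 := by
      exact Complex.norm_eq_one_of_pow_eq_one hωk (by omega)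
    set a : ℝ := ‖c m₀ * (ω ^ m₀ - 1)‖ with hadef
    have hapos : 0 < a := by
      rw [hadef]
      exact norm_pos_iff.mpr (mul_ne_zero hm₀c (sub_ne_zero.mpr hm₀ω))
    have haA : a = A ω := by rw [hA]; simp only [dif_pos h]; rfl
    have hαa : α ≤ a := by
      rw [haA]
      exact hαA ω ((Polynomial.mem_nthRootsFinset hkpos 1).mpr hωk)
    clear_value a
    -- the central identity
    set Q : ℂ := ∑ m ∈ Finset.range (N + 1), c m * (ω ^ m - 1) * ξ₀ ^ m with hQdef
    have heq2 : lam * ξ₀ ^ N * (z₀ - ω ^ N * z₁) = Q := by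
      have hs1 : (∑ m ∈ Finset.range (N + 1), c m * ξ₁ ^ m) =
          ∑ m ∈ Finset.range (N + 1), c m * ω ^ m * ξ₀ ^ m :=
        Finset.sum_congr rfl fun m _ => by rw [hξ₁eq, mul_pow]; ring
      have hs2 : Q = (∑ m ∈ Finset.range (N + 1), c m * ω ^ m * ξ₀ ^ m) -
          ∑ m ∈ Finset.range (N + 1), c m * ξ₀ ^ m := by
        rw [hQdef, ← Finset.sum_sub_distrib]
        exact Finset.sum_congr rfl fun m _ => by ring
      have hξ₁N : ξ₁ ^ N = ω ^ N * ξ₀ ^ N := by rw [hξ₁eq, mul_pow]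
      linear_combination heq + hs1 - hs2 + lam * z₁ * hξ₁N
    -- factor Q = ξ₀^m₀ * T
    set T : ℂ := ∑ j ∈ Finset.range (N + 1 - m₀),
        c (m₀ + j) * (ω ^ (m₀ + j) - 1) * ξ₀ ^ j with hTdef
    have hQT : Q = ξ₀ ^ m₀ * T := by
      have h1 : Q = ∑ m ∈ Finset.Ico m₀ (N + 1), c m * (ω ^ m - 1) * ξ₀ ^ m := by
        rw [hQdef]
        refine (Finset.sum_subset ?_ ?_).symm
        · rw [Finset.range_eq_Ico]
          exact Finset.Ico_subset_Ico (Nat.zero_le _) le_rfl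
        · intro x hx hx2
          have hxlt : x < m₀ := by
            simp only [Finset.mem_range] at hx
            simp only [Finset.mem_Ico] at hx2
            omega
          rcases hmin x hxlt with h' | h'
          · rw [h']; ring
          · rw [h', sub_self]; ring
      rw [h1, Finset.sum_Ico_eq_sum_range]
      rw [hTdef, Finset.mul_sum]
      exact Finset.sum_congr rfl fun j _ => by rw [pow_add]; ring
    have hξ₀le1 : ‖ξ₀‖ ≤ 1 := by
      have h2C : (0:ℝ) < 2 * C := by linarith
      have : α / (2 * C) ≤ 1 := by
        rw [div_le_one h2C]
        linarith
      linarith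
    -- estimate |T - a₀|
    have hTa : ‖T - c m₀ * (ω ^ m₀ - 1)‖ ≤ ‖ξ₀‖ * (2 * Sc) := by
      have hsplit : N + 1 - m₀ = (N - m₀) + 1 := by omega
      have hT2 : T = (∑ j ∈ Finset.range (N - m₀),
          c (m₀ + (j + 1)) * (ω ^ (m₀ + (j + 1)) - 1) * ξ₀ ^ (j + 1)) +
          c m₀ * (ω ^ m₀ - 1) := by
        rw [hTdef, hsplit, Finset.sum_range_succ']
        simp
      rw [hT2, add_sub_cancel_right]
      calc ‖∑ j ∈ Finset.range (N - m₀),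
            c (m₀ + (j + 1)) * (ω ^ (m₀ + (j + 1)) - 1) * ξ₀ ^ (j + 1)‖
          ≤ ∑ j ∈ Finset.range (N - m₀),
            ‖c (m₀ + (j + 1)) * (ω ^ (m₀ + (j + 1)) - 1) * ξ₀ ^ (j + 1)‖ :=
            norm_sum_le _ _
        _ ≤ ∑ j ∈ Finset.range (N - m₀),
            ‖c (m₀ + (j + 1))‖ * 2 * ‖ξ₀‖ := by
            refine Finset.sum_le_sum fun j _ => ?_
            rw [norm_mul, norm_mul, norm_pow]
            have hb1 : ‖ω ^ (m₀ + (j + 1)) - 1‖ ≤ 2 := by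
              calc ‖ω ^ (m₀ + (j + 1)) - 1‖
                  ≤ ‖ω ^ (m₀ + (j + 1))‖ + ‖1‖ :=
                    norm_sub_le _ _
                _ = 2 := by rw [norm_pow, habsω]; norm_num
            have hb2 : ‖ξ₀‖ ^ (j + 1) ≤ ‖ξ₀‖ := by
              calc ‖ξ₀‖ ^ (j + 1)
                  ≤ ‖ξ₀‖ ^ 1 :=
                    pow_le_pow_of_le_one (norm_nonneg _) hξ₀le1 (by omega)
                _ = ‖ξ₀‖ := pow_one _
            have hcnn : 0 ≤ ‖c (m₀ + (j + 1))‖ := norm_nonneg _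
            have hξnn : 0 ≤ ‖ξ₀‖ ^ (j + 1) := pow_nonneg (norm_nonneg _) _
            exact mul_le_mul (mul_le_mul_of_nonneg_left hb1 hcnn) hb2 hξnn
              (by positivity)
        _ = (∑ j ∈ Finset.range (N - m₀), ‖c (m₀ + 1 + j)‖) * (2 * ‖ξ₀‖) := by
            rw [Finset.sum_mul]
            refine Finset.sum_congr rfl fun j _ => ?_
            have : m₀ + (j + 1) = m₀ + 1 + j := by omega
            rw [this]; ring
        _ ≤ Sc * (2 * ‖ξ₀‖) := by
            refine mul_le_mul_of_nonneg_right ?_ (by positivity)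
            have he : (∑ j ∈ Finset.range (N - m₀), ‖c (m₀ + 1 + j)‖) =
                ∑ m ∈ Finset.Ico (m₀ + 1) (N + 1), ‖c m‖ := by
              rw [Finset.sum_Ico_eq_sum_range]
              have : N + 1 - (m₀ + 1) = N - m₀ := by omega
              rw [this]
            rw [he, hSc]
            refine Finset.sum_le_sum_of_subset_of_nonneg ?_ ?_
            · rw [Finset.range_eq_Ico]
              exact Finset.Ico_subset_Ico (Nat.zero_le _) le_rfl
            · intro m _ _; exact norm_nonneg _
        _ = ‖ξ₀‖ * (2 * Sc) := by ring
    -- lower bound on |T|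
    have hξC : ‖ξ₀‖ * C < α / 2 := by
      have h1 : ‖ξ₀‖ * C < (α / (2 * C)) * C :=
        mul_lt_mul_of_pos_right hξ₀e hCpos
      have h2 : (α / (2 * C)) * C = α / 2 := by field_simp
      linarith
    have hTa2 : ‖T - c m₀ * (ω ^ m₀ - 1)‖ < a / 2 := by
      have h1 : ‖ξ₀‖ * (2 * Sc) ≤ ‖ξ₀‖ * C := by
        refine mul_le_mul_of_nonneg_left ?_ (norm_nonneg _)
        rw [hC]; linarith
      linarith
    have hTlb : a / 2 < ‖T‖ := by
      have h1 : a ≤ ‖T‖ + ‖T - c m₀ * (ω ^ m₀ - 1)‖ := by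
        calc a = ‖T - (T - c m₀ * (ω ^ m₀ - 1))‖ := by rw [hadef]; ring_nf
        _ ≤ ‖T‖ + ‖T - c m₀ * (ω ^ m₀ - 1)‖ :=
          norm_sub_le _ _
      linarith
    -- upper bound on |Q|
    have hξ₀pos : 0 < ‖ξ₀‖ := by simpa using hξ₀
    have hxpos : 0 < ‖ξ₀‖ ^ m₀ := pow_pos hξ₀pos _
    have hQub : ‖Q‖ ≤ ‖lam‖ * ‖ξ₀‖ ^ m₀ *
        (‖z₀‖ + ‖z₁‖) := by
      rw [← heq2, norm_mul, norm_mul, norm_pow]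
      have h1 : ‖z₀ - ω ^ N * z₁‖ ≤ ‖z₀‖ + ‖z₁‖ := by
        calc ‖z₀ - ω ^ N * z₁‖
            ≤ ‖z₀‖ + ‖ω ^ N * z₁‖ := norm_sub_le _ _
          _ = ‖z₀‖ + ‖z₁‖ := by rw [norm_mul, norm_pow, habsω]; norm_num
      have h2 : ‖ξ₀‖ ^ N ≤ ‖ξ₀‖ ^ m₀ :=
        pow_le_pow_of_le_one (norm_nonneg _) hξ₀le1 hm₀N
      calc ‖lam‖ * ‖ξ₀‖ ^ N * ‖z₀ - ω ^ N * z₁‖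
          ≤ ‖lam‖ * ‖ξ₀‖ ^ N * (‖z₀‖ + ‖z₁‖) := by
            refine mul_le_mul_of_nonneg_left h1 (by positivity)
        _ ≤ ‖lam‖ * ‖ξ₀‖ ^ m₀ * (‖z₀‖ + ‖z₁‖) := by
            have : ‖lam‖ * ‖ξ₀‖ ^ N ≤
                ‖lam‖ * ‖ξ₀‖ ^ m₀ :=
              mul_le_mul_of_nonneg_left h2 (norm_nonneg _)
            refine mul_le_mul_of_nonneg_right this ?_
            positivity
    -- lower bound on |Q| and contradiction
    have hQlb : ‖ξ₀‖ ^ m₀ * (a / 2) < ‖Q‖ := by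
      rw [hQT, norm_mul, norm_pow]
      exact mul_lt_mul_of_pos_left hTlb hxpos
    set δ : ℝ := α / (8 * ‖lam‖) with hδdef
    have hzsum : ‖z₀‖ + ‖z₁‖ < 2 * δ := by
      rw [hδdef]; linarith
    have hchain : ‖ξ₀‖ ^ m₀ * (a / 2) <
        ‖lam‖ * ‖ξ₀‖ ^ m₀ * (2 * δ) := by
      calc ‖ξ₀‖ ^ m₀ * (a / 2) < ‖Q‖ := hQlb
        _ ≤ ‖lam‖ * ‖ξ₀‖ ^ m₀ * (‖z₀‖ + ‖z₁‖) := hQub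
        _ ≤ ‖lam‖ * ‖ξ₀‖ ^ m₀ * (2 * δ) := by
            refine mul_le_mul_of_nonneg_left (le_of_lt hzsum) (by positivity)
    have hfinal : a / 2 < ‖lam‖ * (2 * δ) := by
      have := (mul_lt_mul_iff_right₀ hxpos).mp (by
        calc ‖ξ₀‖ ^ m₀ * (a / 2) <
            ‖lam‖ * ‖ξ₀‖ ^ m₀ * (2 * δ) := hchain
          _ = ‖ξ₀‖ ^ m₀ * (‖lam‖ * (2 * δ)) := by ring)
      exact this
    have hval : ‖lam‖ * (2 * δ) = α / 4 := by
      rw [hδdef]; field_simp; ring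
    rw [hval] at hfinal
    linarith
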